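/- Let V_0 : ℤ → ℝ, ε_1, ε_i ∈ ℝ. Let ψ_1 : ℤ → ℝ be nowhere vanishing with −Δ²ψ_1(n) + V_0(n)ψ_1(n) = ε_1 ψ_1(n+2) for all n, set f_1(n) = Δψ_1(n)/ψ_1(n) and V_1(n) = V_0(n+1) − 2Δf_1(n+1). Let ψ_i : ℤ → ℝ satisfy −Δ²ψ_i(n) + V_0(n)ψ_i(n) = ε_i ψ_i(n+2) for all n. Then the sequence ψ̃_i(n) := −Δψ_i(n) + f_1(n)ψ_i(n), which equals −(ψ_1(n)ψ_i(n+1) − ψ_1(n+1)ψ_i(n))/ψ_1(n) = −C(ψ_1, ψ_i)(n)/ψ_1(n), satisfies −Δ²ψ̃_i(n) + V_1(n)ψ̃_i(n) = ε_i ψ̃_i(n+2) for all n ∈ ℤ. -/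

import Mathlib

/-- If ψ₁ is a nowhere-vanishing solution of
−Δ²ψ₁ + V₀ψ₁ = ε₁ψ₁(·+2), f₁ = Δψ₁/ψ₁, V₁(n) = V₀(n+1) − 2Δf₁(n+1), and ψᵢ
solves −Δ²ψᵢ + V₀ψᵢ = εᵢψᵢ(·+2), then ψ̃ᵢ = −Δψᵢ + f₁ψᵢ = −C(ψ₁,ψᵢ)/ψ₁ solves
−Δ²ψ̃ᵢ + V₁ψ̃ᵢ = εᵢψ̃ᵢ(·+2). -/
theorem stmt_16 (V0 : ℤ → ℝ) (ε1 εi : ℝ) (ψ1 ψi : ℤ → ℝ)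
    (hne : ∀ n : ℤ, ψ1 n ≠ 0)
    (hψ1 : ∀ n : ℤ, -(ψ1 (n+2) - 2 * ψ1 (n+1) + ψ1 n) + V0 n * ψ1 n = ε1 * ψ1 (n+2))
    (f1 : ℤ → ℝ)
    (hf : ∀ n : ℤ, f1 n = (ψ1 (n+1) - ψ1 n) / ψ1 n)
    (V1 : ℤ → ℝ)
    (hV1 : ∀ n : ℤ, V1 n = V0 (n+1) - 2 * (f1 (n+2) - f1 (n+1)))
    (hψi : ∀ n : ℤ, -(ψi (n+2) - 2 * ψi (n+1) + ψi n) + V0 n * ψi n = εi * ψi (n+2))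
    (ψti : ℤ → ℝ)
    (hψti : ∀ n : ℤ, ψti n = -(ψi (n+1) - ψi n) + f1 n * ψi n) :
    (∀ n : ℤ, ψti n = -((ψ1 n * ψi (n+1) - ψ1 (n+1) * ψi n) / ψ1 n)) ∧
    (∀ n : ℤ, -(ψti (n+2) - 2 * ψti (n+1) + ψti n) + V1 n * ψti n = εi * ψti (n+2)) := by
  have h1 : ∀ n : ℤ, ψti n = -((ψ1 n * ψi (n+1) - ψ1 (n+1) * ψi n) / ψ1 n) := by
    intro n
    rw [hψti, hf]
    field_simp [hne n]
    ring
  refine ⟨h1, fun n => ?_⟩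
  have e1h := hψ1 n
  have e2h := hψ1 (n+1)
  have e3h := hψi n
  have e4h := hψi (n+1)
  have ha := hne n
  have hb := hne (n+1)
  have hc := hne (n+2)
  have i1 : n+1+1 = n+2 := by ring
  have i2 : n+2+1 = n+3 := by ring
  have i3 : n+1+2 = n+3 := by ring
  rw [i3, i1] at e2h e4h
  rw [h1 n, h1 (n+1), h1 (n+2), hV1 n, hf (n+1), hf (n+2), i1, i2]
  field_simp
  linear_combination
    (-(ψ1 n * ψ1 (n+1) * ψ1 (n+2))) * e4h + (ψ1 n * ψ1 (n+1) * ψ1 (n+3)) * e3h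
      - (ψ1 (n+1) * ψ1 (n+3) * ψi n) * e1h + (ψ1 (n+1) * ψ1 (n+2) * ψi n) * e2h
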